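/- Any spatial spectrum access game satisfying the congestion property whose directed interference graph is a directed forest has a pure Nash equilibrium. Here the graph is a directed forest if the undirected graph obtained by ignoring edge directions (i adjacent to j iff i ∈ 𝒩_j or j ∈ 𝒩_i) is acyclic, i.e., a disjoint union of trees. -/

import Mathlib

/-- The undirected graph obtained from the directed interference graph by ignoring
the directions of edges: `i` is adjacent to `j` iff `i ∈ 𝒩 j` or `j ∈ 𝒩 i`. -/
def stmt5UndirGraph {N : ℕ} (𝒩 : Fin N → Finset (Fin N)) : SimpleGraph (Fin N) where
  Adj i j := i ≠ j ∧ (i ∈ 𝒩 j ∨ j ∈ 𝒩 i)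
  symm := ⟨fun _ _ h => ⟨h.1.symm, h.2.symm⟩⟩
  loopless := ⟨fun _ h => h.1 rfl⟩

open SimpleGraph

lemma myAcyclicMono {V : Type*} {G H : SimpleGraph V} (h : G ≤ H) (hH : H.IsAcyclic) :
    G.IsAcyclic := fun _ c hc => hH (c.mapLe h) ((Walk.mapLe_isCycle h).mpr hc)

lemma headEdgeUnique {V : Type*} {G : SimpleGraph V} {y x : V} (p : G.Walk y x)
    (hp : p.IsPath) {c d : V} (hc : s(c, y) ∈ p.edges) (hd : s(d, y) ∈ p.edges) : c = d := by
  cases p with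
  | nil => simp at hc
  | @cons y w x h r =>
    have hy : y ∉ r.support := by
      have h2 := hp.support_nodup
      rw [Walk.support_cons, List.nodup_cons] at h2
      exact h2.1
    have key : ∀ e : V, s(e, y) ∈ (Walk.cons h r).edges → e = w := by
      intro e he
      rw [Walk.edges_cons, List.mem_cons] at he
      rcases he with he | he
      · rw [Sym2.eq_iff] at he
        rcases he with ⟨he1, he2⟩ | ⟨he1, _⟩
        · exact absurd he2 h.ne
        · exact he1
      · exact absurd (Walk.snd_mem_support_of_mem_edges r he) hy
    rw [key c hc, key d hd]

lemma existsLeaf {n : ℕ} (G : SimpleGraph (Fin n)) (hG : G.IsAcyclic)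
    (V : Finset (Fin n)) (hV : V.Nonempty)
    (hedge : ∀ i j, G.Adj i j → i ∈ V) :
    ∃ v ∈ V, ∃ u, ∀ i, G.Adj v i → i = u := by
  classical
  by_contra hcon
  push_neg at hcon
  have grow : ∀ k, ∃ (y x : Fin n) (p : G.Walk y x), p.IsPath ∧ y ∈ V ∧ k ≤ p.length := by
    intro k
    induction k with
    | zero =>
      obtain ⟨v, hv⟩ := hV
      exact ⟨v, v, Walk.nil, Walk.IsPath.nil, hv, Nat.zero_le _⟩
    | succ k ihk =>
      obtain ⟨y, x, p, hp, hyV, hk⟩ := ihk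
      obtain ⟨c₁, hc₁, -⟩ := hcon y hyV y
      obtain ⟨c₂, hc₂, hne⟩ := hcon y hyV c₁
      by_cases h1 : c₁ ∈ p.support
      · by_cases h2 : c₂ ∈ p.support
        · exfalso
          have hcyc : ∀ c, G.Adj y c → ∀ hs : c ∈ p.support, s(c, y) ∈ p.edges := by
            intro c hc hs
            by_contra hnot
            have hq : (p.takeUntil c hs).IsPath := hp.takeUntil hs
            have : (Walk.cons hc.symm (p.takeUntil c hs)).IsCycle := by
              rw [Walk.cons_isCycle_iff]
              exact ⟨hq, fun hmem => hnot (Walk.edges_takeUntil_subset p hs hmem)⟩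
            exact hG _ this
          exact hne (headEdgeUnique p hp (hcyc c₂ hc₂ h2) (hcyc c₁ hc₁ h1))
        · refine ⟨c₂, x, Walk.cons hc₂.symm p, hp.cons h2, hedge _ _ hc₂.symm, ?_⟩
          rw [Walk.length_cons]; omega
      · refine ⟨c₁, x, Walk.cons hc₁.symm p, hp.cons h1, hedge _ _ hc₁.symm, ?_⟩
        rw [Walk.length_cons]; omega
  obtain ⟨y, x, p, hp, -, hk⟩ := grow (Fintype.card (Fin n))
  have := hp.length_lt
  omega

/-- Generalized payoff: `f n m S` is player `n`'s payoff on channel `m`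
with same-channel in-neighbors `S`. -/
def stmt5Pay {N M : ℕ} (f : Fin (N+1) → Fin (M+1) → Finset (Fin (N+1)) → ℝ)
    (𝒩 : Fin (N+1) → Finset (Fin (N+1))) (a : Fin (N+1) → Fin (M+1)) (n : Fin (N+1)) : ℝ :=
  f n (a n) ((𝒩 n).filter (fun i => a i = a n))

lemma stmt5Key {N M : ℕ} (V : Finset (Fin (N+1))) :
    ∀ (𝒩 : Fin (N+1) → Finset (Fin (N+1)))
      (f : Fin (N+1) → Fin (M+1) → Finset (Fin (N+1)) → ℝ),
    (∀ n, 𝒩 n ⊆ V.erase n) → (∀ n, n ∉ V → 𝒩 n = ∅) →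
    (∀ n m S T, S ⊆ T → T ⊆ 𝒩 n → f n m T ≤ f n m S) →
    (stmt5UndirGraph 𝒩).IsAcyclic →
    ∃ a, ∀ n ∈ V, ∀ m, stmt5Pay f 𝒩 (Function.update a n m) n ≤ stmt5Pay f 𝒩 a n := by
  classical
  induction V using Finset.strongInduction with
  | _ V ih =>
  intro 𝒩 f hsub hout hf hac
  rcases V.eq_empty_or_nonempty with rfl | hV
  · exact ⟨fun _ => 0, by simp⟩
  have hedge : ∀ i j, (stmt5UndirGraph 𝒩).Adj i j → i ∈ V := by
    rintro i j ⟨hij, hor⟩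
    rcases hor with hi | hj
    · exact (Finset.mem_erase.mp (hsub j hi)).2
    · by_contra hiV
      rw [hout i hiV] at hj
      exact absurd hj (Finset.notMem_empty j)
  obtain ⟨v, hvV, u, hu⟩ := existsLeaf (stmt5UndirGraph 𝒩) hac V hV hedge
  have h𝒩v : ∀ i, i ∈ 𝒩 v → i = u := by
    intro i hi
    exact hu i ⟨((Finset.mem_erase.mp (hsub v hi)).1).symm, Or.inr hi⟩
  have houtv : ∀ n, v ∈ 𝒩 n → n = u := by
    intro n hn
    exact hu n ⟨(Finset.mem_erase.mp (hsub n hn)).1, Or.inl hn⟩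
  set V' := V.erase v with hV'def
  set 𝒩' : Fin (N+1) → Finset (Fin (N+1)) :=
    fun n => if n = v then ∅ else (𝒩 n).erase v with h𝒩'def
  have hV'ss : V' ⊂ V := Finset.erase_ssubset hvV
  have h𝒩'sub : ∀ n, 𝒩' n ⊆ 𝒩 n := by
    intro n i hi
    simp only [h𝒩'def] at hi
    by_cases hnv : n = v
    · rw [if_pos hnv] at hi; exact absurd hi (Finset.notMem_empty i)
    · rw [if_neg hnv] at hi; exact (Finset.mem_erase.mp hi).2
  have h𝒩'v : ∀ n, ∀ i ∈ 𝒩' n, i ≠ v := by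
    intro n i hi
    simp only [h𝒩'def] at hi
    by_cases hnv : n = v
    · rw [if_pos hnv] at hi; exact absurd hi (Finset.notMem_empty i)
    · rw [if_neg hnv] at hi; exact (Finset.mem_erase.mp hi).1
  have h𝒩'n : ∀ n, ∀ i ∈ 𝒩' n, i ≠ n := by
    intro n i hi
    exact (Finset.mem_erase.mp (hsub n (h𝒩'sub n hi))).1
  have hsub' : ∀ n, 𝒩' n ⊆ V'.erase n := by
    intro n i hi
    have h1 := Finset.mem_erase.mp (hsub n (h𝒩'sub n hi))
    exact Finset.mem_erase.mpr ⟨h1.1, Finset.mem_erase.mpr ⟨h𝒩'v n i hi, h1.2⟩⟩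
  have hout' : ∀ n, n ∉ V' → 𝒩' n = ∅ := by
    intro n hn
    by_cases hnv : n = v
    · simp only [h𝒩'def]; simp [hnv]
    · have hnV : n ∉ V := fun h => hn (Finset.mem_erase.mpr ⟨hnv, h⟩)
      simp only [h𝒩'def]; simp [hnv, hout n hnV]
  have hac' : (stmt5UndirGraph 𝒩').IsAcyclic := by
    refine myAcyclicMono ?_ hac
    rintro i j ⟨hij, hor⟩
    refine ⟨hij, ?_⟩
    rcases hor with hi | hj
    · exact Or.inl (h𝒩'sub j hi)
    · exact Or.inr (h𝒩'sub i hj)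
  -- profile agreement lemma for reduced filters
  have hfilter_eq : ∀ (b b' : Fin (N+1) → Fin (M+1)) n, b n = b' n →
      (∀ i ∈ 𝒩' n, b i = b' i) →
      (𝒩' n).filter (fun i => b i = b n) = (𝒩' n).filter (fun i => b' i = b' n) := by
    intro b b' n hbn hbi
    apply Finset.filter_congr
    intro i hi
    rw [hbi i hi, hbn]
  by_cases hA : ∃ c, ∀ m, m ≠ c → f v m ∅ ≤ f v c (𝒩 v)
  · -- Case A: v can sit fixed at channel c and is always happy
    obtain ⟨c, hcA⟩ := hA
    set X : Fin (N+1) → Fin (M+1) → Finset (Fin (N+1)) :=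
      fun n m => if v ∈ 𝒩 n ∧ m = c then {v} else ∅ with hXdef
    have hXsub : ∀ n m, X n m ⊆ 𝒩 n := by
      intro n m i hi
      simp only [hXdef] at hi
      split_ifs at hi with hcond
      · rw [Finset.mem_singleton] at hi; subst hi; exact hcond.1
      · exact absurd hi (Finset.notMem_empty i)
    set f' : Fin (N+1) → Fin (M+1) → Finset (Fin (N+1)) → ℝ :=
      fun n m S => f n m (S ∪ X n m) with hf'def
    have hf' : ∀ n m S T, S ⊆ T → T ⊆ 𝒩' n → f' n m T ≤ f' n m S := by
      intro n m S T hST hT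
      simp only [hf'def]
      exact hf n m _ _ (Finset.union_subset_union_left hST)
        (Finset.union_subset ((hT.trans (h𝒩'sub n))) (hXsub n m))
    obtain ⟨a', ha'⟩ := ih V' hV'ss 𝒩' f' hsub' hout' hf' hac'
    set a := Function.update a' v c with hadef
    have hav : a v = c := Function.update_self v c a'
    -- filter decomposition
    have hFC : ∀ (b : Fin (N+1) → Fin (M+1)) n, n ≠ v → b v = c →
        (𝒩 n).filter (fun i => b i = b n)
          = ((𝒩' n).filter (fun i => b i = b n)) ∪ X n (b n) := by
      intro b n hnv hbv
      ext i
      simp only [Finset.mem_union, Finset.mem_filter, h𝒩'def, hXdef]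
      rw [if_neg hnv]
      by_cases hiv : i = v
      · subst hiv
        simp only [Finset.mem_erase, ne_eq, not_true_eq_false, false_and]
        constructor
        · rintro ⟨hvN, hbvn⟩
          right
          rw [if_pos ⟨hvN, by rw [← hbvn, hbv]⟩]
          exact Finset.mem_singleton_self i
        · rintro (h1 | hX)
          · simp at h1
          · split_ifs at hX with hcond
            · exact ⟨hcond.1, by rw [hbv, hcond.2]⟩
            · exact absurd hX (Finset.notMem_empty i)
      · constructor
        · rintro ⟨hiN, hbi⟩
          exact Or.inl ⟨Finset.mem_erase.mpr ⟨hiv, hiN⟩, hbi⟩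
        · rintro (⟨hiN', hbi⟩ | hX)
          · exact ⟨(Finset.mem_erase.mp hiN').2, hbi⟩
          · exfalso
            split_ifs at hX
            · rw [Finset.mem_singleton] at hX; exact hiv hX
            · exact Finset.notMem_empty i hX
    have hPay : ∀ b n, n ≠ v → b v = c → stmt5Pay f 𝒩 b n = stmt5Pay f' 𝒩' b n := by
      intro b n hnv hbv
      unfold stmt5Pay
      simp only [hf'def]
      rw [hFC b n hnv hbv]
    refine ⟨a, ?_⟩
    intro n hn m
    by_cases hnv : n = v
    · subst hnv
      by_cases hmc : m = c
      · exact le_of_eq (by rw [hmc, ← hav, Function.update_eq_self])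
      · unfold stmt5Pay
        rw [hav, Function.update_self]
        calc f n m ((𝒩 n).filter (fun i => Function.update a n m i = m))
            ≤ f n m ∅ := hf n m ∅ _ (Finset.empty_subset _) (Finset.filter_subset _ _)
          _ ≤ f n c (𝒩 n) := hcA m hmc
          _ ≤ f n c ((𝒩 n).filter (fun i => a i = c)) :=
              hf n c _ _ (Finset.filter_subset _ _) (le_refl _)
    · have hn' : n ∈ V' := Finset.mem_erase.mpr ⟨hnv, hn⟩
      have hbv : (Function.update a n m) v = c := by
        rw [Function.update_of_ne (Ne.symm hnv)]; exact hav
      have hfeq : ((𝒩' n).filter (fun i => Function.update a n m i = m))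
          = ((𝒩' n).filter (fun i => Function.update a' n m i = m)) := by
        apply Finset.filter_congr
        intro i hi
        have hiv := h𝒩'v n i hi
        have hin := h𝒩'n n i hi
        rw [Function.update_of_ne hin, Function.update_of_ne hin, hadef,
          Function.update_of_ne hiv]
      have hProf : stmt5Pay f' 𝒩' (Function.update a n m) n
          = stmt5Pay f' 𝒩' (Function.update a' n m) n := by
        unfold stmt5Pay
        rw [Function.update_self, Function.update_self, hfeq]
      have hProf0 : stmt5Pay f' 𝒩' a n = stmt5Pay f' 𝒩' a' n := by
        unfold stmt5Pay
        have han : a n = a' n := by rw [hadef, Function.update_of_ne hnv]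
        rw [hfilter_eq a a' n han (fun i hi => by
          rw [hadef, Function.update_of_ne (h𝒩'v n i hi)]), han]
      calc stmt5Pay f 𝒩 (Function.update a n m) n
          = stmt5Pay f' 𝒩' (Function.update a n m) n := hPay _ n hnv hbv
        _ = stmt5Pay f' 𝒩' (Function.update a' n m) n := hProf
        _ ≤ stmt5Pay f' 𝒩' a' n := ha' n hn' m
        _ = stmt5Pay f' 𝒩' a n := hProf0.symm
        _ = stmt5Pay f 𝒩 a n := (hPay a n hnv hav).symm
  · -- Case B
    push_neg at hA
    -- hA : ∀ c, ∃ m, m ≠ c ∧ f v c (𝒩 v) < f v m ∅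
    have hβex : ∀ c₀ : Fin (M+1), ∃ b, b ≠ c₀ ∧ f v c₀ (𝒩 v) < f v b ∅ ∧
        ∀ m, m ≠ c₀ → f v m ∅ ≤ f v b ∅ := by
      intro c₀
      obtain ⟨w, hw1, hw2⟩ := hA c₀
      obtain ⟨b, hb, hmax⟩ := Finset.exists_max_image
        (Finset.univ.filter (fun m => m ≠ c₀)) (fun m => f v m ∅)
        ⟨w, by simp [hw1]⟩
      refine ⟨b, (Finset.mem_filter.mp hb).2, lt_of_lt_of_le hw2 (hmax w (by simp [hw1])),
        fun m hm => hmax m (by simp [hm])⟩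
    choose β hβne hβgt hβmax using hβex
    have hNvne : (𝒩 v).Nonempty := by
      rw [Finset.nonempty_iff_ne_empty]
      intro h
      obtain ⟨c₀, -, hmax⟩ := Finset.exists_max_image Finset.univ
        (fun m => f v m ∅) Finset.univ_nonempty
      have h1 := hβgt c₀
      rw [h] at h1
      exact absurd (hmax (β c₀) (Finset.mem_univ _)) (not_le.mpr h1)
    have hNv : 𝒩 v = {u} := by
      obtain ⟨w, hw⟩ := hNvne
      have hwu := h𝒩v w hw
      subst hwu
      apply Finset.eq_singleton_iff_unique_mem.mpr ⟨hw, fun i hi => h𝒩v i hi⟩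
    have huNv : u ∈ 𝒩 v := by rw [hNv]; exact Finset.mem_singleton_self u
    have huv : u ≠ v := (Finset.mem_erase.mp (hsub v huNv)).1.symm |>.symm
    have huV' : u ∈ V' := hsub v huNv
    obtain ⟨a', ha'⟩ := ih V' hV'ss 𝒩' f hsub' hout'
      (fun n m S T hST hT => hf n m S T hST (hT.trans (h𝒩'sub n))) hac'
    set a := Function.update a' v (β (a' u)) with hadef
    have hau : a u = a' u := by rw [hadef, Function.update_of_ne huv]
    have hav : a v = β (a' u) := Function.update_self v _ a'
    refine ⟨a, ?_⟩
    intro n hn m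
    by_cases hnv : n = v
    · subst hnv
      unfold stmt5Pay
      rw [hav, hNv]
      have hfil1 : ({u} : Finset (Fin (N+1))).filter (fun i => a i = β (a' u)) = ∅ := by
        rw [Finset.filter_singleton, if_neg]
        rw [hau]
        exact fun h => hβne (a' u) h.symm
      have hfil2 : ({u} : Finset (Fin (N+1))).filter
          (fun i => Function.update a n m i = m)
          = if a' u = m then {u} else ∅ := by
        rw [Finset.filter_singleton]
        congr 1
        rw [show Function.update a n m u = a' u from by
          rw [Function.update_of_ne huv, hau]]
      rw [Function.update_self, hfil1, hfil2]
      by_cases hm : a' u = m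
      · rw [if_pos hm, ← hm, ← hNv]
        exact le_of_lt (hβgt (a' u))
      · rw [if_neg hm]
        exact hβmax (a' u) m (fun h => hm h.symm)
    · have hn' : n ∈ V' := Finset.mem_erase.mpr ⟨hnv, hn⟩
      -- deviation inequality: full filter ⊇ reduced filter
      have hdev : ∀ m', stmt5Pay f 𝒩 (Function.update a n m') n
          ≤ stmt5Pay f 𝒩' (Function.update a' n m') n := by
        intro m'
        unfold stmt5Pay
        rw [Function.update_self, Function.update_self]
        apply hf n m'
        · intro i hi
          rw [Finset.mem_filter] at hi ⊢
          have hiv := h𝒩'v n i hi.1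
          have hin := h𝒩'n n i hi.1
          refine ⟨h𝒩'sub n hi.1, ?_⟩
          have h2 : a' i = m' := by
            have := hi.2
            rwa [Function.update_of_ne hin] at this
          rw [Function.update_of_ne hin, hadef, Function.update_of_ne hiv]
          exact h2
        · exact Finset.filter_subset _ _
      -- current profile equality
      have hcur : stmt5Pay f 𝒩 a n = stmt5Pay f 𝒩' a' n := by
        unfold stmt5Pay
        have han : a n = a' n := by rw [hadef, Function.update_of_ne hnv]
        rw [← han]
        congr 1
        ext i
        rw [Finset.mem_filter, Finset.mem_filter]
        constructor
        · rintro ⟨hiN, hia⟩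
          by_cases hiv : i = v
          · exfalso
            subst hiv
            have hnu : n = u := houtv n hiN
            subst hnu
            rw [hav, hau] at hia
            exact hβne (a' n) hia
          · refine ⟨?_, by rwa [hadef, Function.update_of_ne hiv] at hia⟩
            simp only [h𝒩'def]
            rw [if_neg hnv]
            exact Finset.mem_erase.mpr ⟨hiv, hiN⟩
        · rintro ⟨hiN', hia⟩
          have hiv := h𝒩'v n i hiN'
          refine ⟨h𝒩'sub n hiN', ?_⟩
          rw [hadef, Function.update_of_ne hiv]
          exact hia
      calc stmt5Pay f 𝒩 (Function.update a n m) n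
          ≤ stmt5Pay f 𝒩' (Function.update a' n m) n := hdev m
        _ ≤ stmt5Pay f 𝒩' a' n := ha' n hn' m
        _ = stmt5Pay f 𝒩 a n := hcur.symm

/-- Any spatial spectrum access game satisfying the congestion property whose directed
interference graph is a directed forest (the underlying undirected graph is acyclic)
has a pure Nash equilibrium. -/
theorem stmt_5 (N M : ℕ)
    (𝒩 : Fin (N + 1) → Finset (Fin (N + 1)))
    (hself : ∀ n, n ∉ 𝒩 n)
    (hforest : (stmt5UndirGraph 𝒩).IsAcyclic)
    (θ : Fin (M + 1) → ℝ) (B : Fin (M + 1) → Fin (N + 1) → ℝ)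
    (g : Fin (N + 1) → Finset (Fin (N + 1)) → ℝ)
    (hθ : ∀ m, 0 < θ m ∧ θ m < 1)
    (hB : ∀ m n, 0 < B m n)
    (hg : ∀ n S, S ⊆ 𝒩 n → 0 < g n S ∧ g n S < 1)
    -- congestion property:
    (hCP : ∀ n S T, S ⊆ T → T ⊆ 𝒩 n → g n T ≤ g n S)
    (U : (Fin (N + 1) → Fin (M + 1)) → Fin (N + 1) → ℝ)
    (hU : ∀ a n, U a n = θ (a n) * B (a n) n *
      g n ((𝒩 n).filter (fun i => a i = a n))) :
    ∃ a : Fin (N + 1) → Fin (M + 1), ∀ (n : Fin (N + 1)) (m : Fin (M + 1)),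
      U (Function.update a n m) n ≤ U a n := by
  classical
  obtain ⟨a, ha⟩ := stmt5Key (N := N) (M := M) Finset.univ 𝒩
    (fun n m S => θ m * B m n * g n S)
    (fun n i hi => Finset.mem_erase.mpr ⟨fun h => hself n (h ▸ hi), Finset.mem_univ i⟩)
    (fun n hn => absurd (Finset.mem_univ n) hn)
    (fun n m S T hST hT => mul_le_mul_of_nonneg_left (hCP n S T hST hT)
      (le_of_lt (mul_pos (hθ m).1 (hB m n))))
    hforest
  refine ⟨a, fun n m => ?_⟩
  rw [hU, hU]
  exact ha n (Finset.mem_univ n) m
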